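/- Let k ≥ 2 and let π = (π_1, …, π_L) be a linear (k−1)-superpattern of length L. Then the permutation γ = (L+1, π_1, π_2, …, π_L) of length L+1 is a circular k-superpattern; that is, for every permutation σ of length k there is a rotation ρ_r(σ) of σ and indices 0 ≤ i_1 < i_2 < ⋯ < i_k ≤ L such that the subsequence (γ(i_1), …, γ(i_k)) is order-isomorphic to ρ_r(σ). -/

import Mathlib

/-- `l` is the one-line notation of a permutation of `{1, …, n}`. -/
def IsPermList (n : ℕ) (l : List ℕ) : Prop := l.Perm ((List.range n).map (· + 1))

/-- The pattern `σ` occurs as an order-isomorphic subsequence of the word `w`: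
there are indices `i₁ < ⋯ < i_k` with `w (i_p) < w (i_q)` exactly when `σ p < σ q`. -/
def OrderIsoContains (w σ : List ℕ) : Prop :=
  ∃ f : Fin σ.length → Fin w.length, StrictMono f ∧
    ∀ p q : Fin σ.length, w.get (f p) < w.get (f q) ↔ σ.get p < σ.get q

/-- `w` contains every permutation of length `k` as an order-isomorphic subsequence. -/
def IsSuperpattern (k : ℕ) (w : List ℕ) : Prop :=
  ∀ σ : List ℕ, IsPermList k σ → OrderIsoContains w σ

/-- `w` circularly contains every permutation of length `k`: some rotation
`ρ_r σ = σ.rotate r` occurs as an order-isomorphic subsequence of `w`. -/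
def IsCircSuperpattern (k : ℕ) (w : List ℕ) : Prop :=
  ∀ σ : List ℕ, IsPermList k σ → ∃ r < k, OrderIsoContains w (σ.rotate r)

/-- If `π` is a linear `(k−1)`-superpattern of length `L`, then
`γ = (L+1, π₁, …, π_L)` is a circular `k`-superpattern. -/
theorem circ_superpattern_from_linear (k L : ℕ) (hk : 2 ≤ k)
    (π : List ℕ) (hπ : IsPermList L π) (hsup : IsSuperpattern (k - 1) π) :
    IsCircSuperpattern k ((L + 1) :: π) := by
  obtain ⟨m, rfl⟩ : ∃ m, k = m + 1 := ⟨k - 1, by omega⟩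
  have hsup' : IsSuperpattern m π := by simpa using hsup
  intro σ hσ
  have hσlen : σ.length = m + 1 := by simpa using hσ.length_eq
  have hkmem : (m + 1) ∈ σ := by
    rw [hσ.mem_iff]
    simp only [List.mem_map, List.mem_range]
    exact ⟨m, by omega, rfl⟩
  obtain ⟨s, t, hst⟩ := List.append_of_mem hkmem
  set τ := t ++ s with hτdef
  have hslen : s.length < m + 1 := by
    have : σ.length = s.length + (t.length + 1) := by rw [hst]; simp
    omega
  have hrot : σ.rotate s.length = (m + 1) :: τ := by
    rw [hst, List.rotate_eq_drop_append_take (by simp)]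
    simp [hτdef]
  have hperm1 : ((m + 1) :: τ).Perm ((List.range (m + 1)).map (· + 1)) := by
    rw [← hrot]
    exact (List.rotate_perm σ s.length).trans hσ
  have hrange : ((List.range (m + 1)).map (· + 1)) =
      ((List.range m).map (· + 1)) ++ [m + 1] := by
    rw [List.range_succ, List.map_append]; rfl
  have hτperm : IsPermList m τ := by
    have : ((m + 1) :: τ).Perm ((m + 1) :: (List.range m).map (· + 1)) := by
      rw [hrange] at hperm1
      exact hperm1.trans (List.perm_append_singleton _ _)
    exact this.cons_inv
  obtain ⟨f, hf, hiso⟩ := hsup' τ hτperm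
  have hπle : ∀ x ∈ π, x ≤ L := by
    intro x hx
    rw [hπ.mem_iff] at hx
    simp only [List.mem_map, List.mem_range] at hx
    omega
  have hτle : ∀ x ∈ τ, x ≤ m := by
    intro x hx
    rw [hτperm.mem_iff] at hx
    simp only [List.mem_map, List.mem_range] at hx
    omega
  refine ⟨s.length, hslen, ?_⟩
  rw [hrot]
  refine ⟨fun p => Fin.cases (0 : Fin (π.length + 1)) (fun q => (f q).succ) p, ?_, ?_⟩
  · intro p q hpq
    induction p using Fin.cases with
    | zero =>
      induction q using Fin.cases with
      | zero => exact absurd hpq (lt_irrefl _)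
      | succ j => simp
    | succ i =>
      induction q using Fin.cases with
      | zero => exact absurd hpq (Fin.not_lt_zero _)
      | succ j =>
        simp only [Fin.cases_succ]
        exact Fin.succ_lt_succ_iff.mpr (hf (Fin.succ_lt_succ_iff.mp hpq))
  · intro p q
    induction p using Fin.cases with
    | zero =>
      induction q using Fin.cases with
      | zero => simp
      | succ j =>
        simp only [Fin.cases_zero, Fin.cases_succ]
        show (L + 1) < π.get (f j) ↔ (m + 1) < τ.get j
        have h1 : π.get (f j) ≤ L := hπle _ (List.get_mem π (f j))
        have h2 : τ.get j ≤ m := hτle _ (List.get_mem τ j)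
        constructor <;> intro h <;> omega
    | succ i =>
      induction q using Fin.cases with
      | zero =>
        simp only [Fin.cases_zero, Fin.cases_succ]
        show π.get (f i) < (L + 1) ↔ τ.get i < (m + 1)
        have h1 : π.get (f i) ≤ L := hπle _ (List.get_mem π (f i))
        have h2 : τ.get i ≤ m := hτle _ (List.get_mem τ i)
        constructor <;> intro h <;> omega
      | succ j =>
        simp only [Fin.cases_succ]
        show π.get (f i) < π.get (f j) ↔ τ.get i < τ.get j
        exact hiso i j
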